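/- The steady-state mean BVP of the insect-respiration model has at most one solution: if v₀, v₁ satisfy the ODE system and all four boundary conditions, then for every x ∈ [0, L] one has v₀(x) = m·(ρ·x + (1−ρ)·sinh(γx)/(γ·cosh(γL))) and v₁(x) = m·(1−ρ)·(x − sinh(γx)/(γ·cosh(γL))), where m = ρ·c/(ρ·L + (1−ρ)·tanh(γL)/γ). -/

import Mathlib

lemma aux_hasDerivAt {v : ℝ → ℝ} {a b : ℝ} (h : ContDiffOn ℝ 2 v (Set.Ioo a b)) :
    ∀ x ∈ Set.Ioo a b, HasDerivAt v (deriv v x) x := fun x hx =>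
  ((h.differentiableOn (by norm_num)).differentiableAt (isOpen_Ioo.mem_nhds hx)).hasDerivAt

lemma aux_hasDerivAt2 {v : ℝ → ℝ} {a b : ℝ} (h : ContDiffOn ℝ 2 v (Set.Ioo a b)) :
    ∀ x ∈ Set.Ioo a b, HasDerivAt (deriv v) (deriv (deriv v) x) x := fun x hx =>
  (((h.deriv_of_isOpen (m := 1) isOpen_Ioo (by norm_num)).differentiableOn one_ne_zero).differentiableAt
    (isOpen_Ioo.mem_nhds hx)).hasDerivAt

lemma const_on_Icc {f : ℝ → ℝ} {L : ℝ} (hder : ∀ x ∈ Set.Icc (0:ℝ) L, HasDerivAt f 0 x) :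
    ∀ x ∈ Set.Icc (0:ℝ) L, f x = f 0 :=
  constant_of_has_deriv_right_zero (fun x hx => (hder x hx).continuousAt.continuousWithinAt)
    (fun x hx => (hder x (Set.mem_Icc_of_Ico hx)).hasDerivWithinAt)

/-- Uniqueness for the steady-state mean BVP of the insect-respiration
model: any solution equals the explicit one. -/
theorem insect_bvp_uniqueness
    (L D α β c ρ γ m : ℝ) (hL : 0 < L) (hD : 0 < D) (hα : 0 < α) (hβ : 0 < β) (hc : 0 < c)
    (hρ : ρ = α / (α + β)) (hγ : γ = Real.sqrt ((α + β) / D))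
    (hm : m = ρ * c / (ρ * L + (1 - ρ) * Real.tanh (γ * L) / γ))
    (v₀ v₁ : ℝ → ℝ) (a b : ℝ) (ha : a < 0) (hb : L < b)
    (hreg0 : ContDiffOn ℝ 2 v₀ (Set.Ioo a b))
    (hreg1 : ContDiffOn ℝ 2 v₁ (Set.Ioo a b))
    (hode0 : ∀ x ∈ Set.Icc (0:ℝ) L, D * deriv (deriv v₀) x = β * v₀ x - α * v₁ x)
    (hode1 : ∀ x ∈ Set.Icc (0:ℝ) L, D * deriv (deriv v₁) x = α * v₁ x - β * v₀ x)
    (hbc0 : v₀ 0 = 0) (hbc1 : v₁ 0 = 0)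
    (hbc2 : deriv v₁ L = 0) (hbc3 : v₀ L = c * α / (α + β)) :
    ∀ x ∈ Set.Icc (0:ℝ) L,
      v₀ x = m * (ρ * x + (1 - ρ) * Real.sinh (γ * x) / (γ * Real.cosh (γ * L))) ∧
      v₁ x = m * (1 - ρ) * (x - Real.sinh (γ * x) / (γ * Real.cosh (γ * L))) := by
  have hαβ : (0:ℝ) < α + β := by linarith
  have hγpos : 0 < γ := by rw [hγ]; exact Real.sqrt_pos.2 (div_pos hαβ hD)
  have hγ2 : γ ^ 2 = (α + β) / D := by rw [hγ]; exact Real.sq_sqrt (le_of_lt (div_pos hαβ hD))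
  have hch : 0 < Real.cosh (γ * L) := Real.cosh_pos _
  have hsh : 0 < Real.sinh (γ * L) := Real.sinh_pos_iff.2 (mul_pos hγpos hL)
  have hIcc : Set.Icc (0:ℝ) L ⊆ Set.Ioo a b := fun x hx =>
    ⟨lt_of_lt_of_le ha hx.1, lt_of_le_of_lt hx.2 hb⟩
  have hL0 : (0:ℝ) ∈ Set.Icc (0:ℝ) L := ⟨le_refl 0, le_of_lt hL⟩
  have hLL : L ∈ Set.Icc (0:ℝ) L := ⟨le_of_lt hL, le_refl L⟩
  have hd0 := aux_hasDerivAt hreg0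
  have hd1 := aux_hasDerivAt hreg1
  have hdd0 := aux_hasDerivAt2 hreg0
  have hdd1 := aux_hasDerivAt2 hreg1
  set A : ℝ := deriv v₀ 0 + deriv v₁ 0 with hAdef
  set B : ℝ := β * deriv v₀ 0 - α * deriv v₁ 0 with hBdef
  -- Step 1: deriv v₀ + deriv v₁ is constant A on [0,L]
  have hF : ∀ x ∈ Set.Icc (0:ℝ) L, deriv v₀ x + deriv v₁ x = A := by
    intro x hx
    refine const_on_Icc (f := fun x => deriv v₀ x + deriv v₁ x) ?_ x hx
    intro y hy
    have h := (hdd0 y (hIcc hy)).add (hdd1 y (hIcc hy))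
    have he : deriv (deriv v₀) y + deriv (deriv v₁) y = 0 := by
      have e0 := hode0 y hy; have e1 := hode1 y hy
      have hD' : D ≠ 0 := ne_of_gt hD
      have : D * (deriv (deriv v₀) y + deriv (deriv v₁) y) = 0 := by linarith
      rcases mul_eq_zero.1 this with h' | h'
      · exact absurd h' hD'
      · exact h'
    rwa [he] at h
  -- Step 2: v₀ + v₁ = A x on [0,L]
  have hP : ∀ x ∈ Set.Icc (0:ℝ) L, v₀ x + v₁ x = A * x := by
    intro x hx
    have h := const_on_Icc (f := fun x => v₀ x + v₁ x - A * x) ?_ x hx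
    · simp only [hbc0, hbc1, mul_zero] at h
      linarith [h]
    · intro y hy
      have h := ((hd0 y (hIcc hy)).add (hd1 y (hIcc hy))).sub ((hasDerivAt_id y).const_mul A)
      have he : deriv v₀ y + deriv v₁ y - A * 1 = 0 := by rw [hF y hy]; ring
      rwa [he] at h
  -- Q functions
  set Qf : ℝ → ℝ := fun x => β * v₀ x - α * v₁ x with hQfdef
  set Q1 : ℝ → ℝ := fun x => β * deriv v₀ x - α * deriv v₁ x with hQ1def
  have hQd : ∀ x ∈ Set.Ioo a b, HasDerivAt Qf (Q1 x) x := fun x hx =>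
    ((hd0 x hx).const_mul β).sub ((hd1 x hx).const_mul α)
  have hQdd : ∀ x ∈ Set.Icc (0:ℝ) L, HasDerivAt Q1 (γ ^ 2 * Qf x) x := by
    intro x hx
    have h := ((hdd0 x (hIcc hx)).const_mul β).sub ((hdd1 x (hIcc hx)).const_mul α)
    have he : β * deriv (deriv v₀) x - α * deriv (deriv v₁) x = γ ^ 2 * Qf x := by
      have e0 := hode0 x hx; have e1 := hode1 x hx
      rw [hγ2, hQfdef]
      rw [div_mul_eq_mul_div, eq_div_iff (ne_of_gt hD)]
      linear_combination β * e0 - α * e1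
    rwa [he] at h
  have hQf0 : Qf 0 = 0 := by simp [hQfdef, hbc0, hbc1]
  have hQ10 : Q1 0 = B := rfl
  -- Step 3: integrating-factor constants
  have hG : ∀ x ∈ Set.Icc (0:ℝ) L,
      (Q1 x + γ * Qf x) * Real.exp (-(γ * x)) = B := by
    intro x hx
    have h := const_on_Icc (f := fun x => (Q1 x + γ * Qf x) * Real.exp (-(γ * x))) ?_ x hx
    · simpa [hQf0, hQ10] using h
    · intro y hy
      have hexp : HasDerivAt (fun z : ℝ => Real.exp (-(γ * z)))
          (Real.exp (-(γ * y)) * (-γ)) y := by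
        have h1 : HasDerivAt (fun z : ℝ => -(γ * z)) (-γ) y := by
          have h := ((hasDerivAt_id y).const_mul γ).neg; simp only [mul_one] at h; exact h
        simpa using h1.exp
      have h := ((hQdd y hy).add ((hQd y (hIcc hy)).const_mul γ)).mul hexp
      have he : (γ ^ 2 * Qf y + γ * Q1 y) * Real.exp (-(γ * y)) +
          (Q1 y + γ * Qf y) * (Real.exp (-(γ * y)) * (-γ)) = 0 := by ring
      simp only [Pi.add_apply] at h
      rwa [he] at h
  have hH : ∀ x ∈ Set.Icc (0:ℝ) L,
      (Q1 x - γ * Qf x) * Real.exp (γ * x) = B := by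
    intro x hx
    have h := const_on_Icc (f := fun x => (Q1 x - γ * Qf x) * Real.exp (γ * x)) ?_ x hx
    · simpa [hQf0, hQ10] using h
    · intro y hy
      have hexp : HasDerivAt (fun z : ℝ => Real.exp (γ * z))
          (Real.exp (γ * y) * γ) y := by
        have h1 : HasDerivAt (fun z : ℝ => γ * z) γ y := by
          simpa using (hasDerivAt_id y).const_mul γ
        simpa using h1.exp
      have h := ((hQdd y hy).sub ((hQd y (hIcc hy)).const_mul γ)).mul hexp
      have he : (γ ^ 2 * Qf y - γ * Q1 y) * Real.exp (γ * y) +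
          (Q1 y - γ * Qf y) * (Real.exp (γ * y) * γ) = 0 := by ring
      simp only [Pi.sub_apply] at h
      rwa [he] at h
  -- Step 4: explicit formulas for Qf and Q1 on [0,L]
  have hGH : ∀ x ∈ Set.Icc (0:ℝ) L,
      Q1 x + γ * Qf x = B * Real.exp (γ * x) ∧
      Q1 x - γ * Qf x = B * Real.exp (-(γ * x)) := by
    intro x hx
    constructor
    · have h := congrArg (fun t => t * Real.exp (γ * x)) (hG x hx)
      rwa [mul_assoc, ← Real.exp_add, neg_add_cancel, Real.exp_zero, mul_one] at h
    · have h := congrArg (fun t => t * Real.exp (-(γ * x))) (hH x hx)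
      rwa [mul_assoc, ← Real.exp_add, add_neg_cancel, Real.exp_zero, mul_one] at h
  have hQsinh : ∀ x ∈ Set.Icc (0:ℝ) L, γ * Qf x = B * Real.sinh (γ * x) := by
    intro x hx
    obtain ⟨g', h'⟩ := hGH x hx
    rw [Real.sinh_eq]
    linear_combination (g' - h') / 2
  have hQcosh : ∀ x ∈ Set.Icc (0:ℝ) L, Q1 x = B * Real.cosh (γ * x) := by
    intro x hx
    obtain ⟨g', h'⟩ := hGH x hx
    rw [Real.cosh_eq]
    linear_combination (g' + h') / 2
  -- Step 5: boundary conditions determine A and B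
  have hAL : deriv v₀ L = A := by have := hF L hLL; rw [hbc2] at this; linarith
  have eq1 : B * Real.cosh (γ * L) = β * A := by
    have h := hQcosh L hLL
    rw [hQ1def] at h
    simp only [hbc2, hAL] at h
    linarith [h]
  have hv0L : (α + β) * v₀ L = c * α := by
    rw [hbc3]; field_simp
  have e2 : α * (A * L) + Qf L = c * α := by
    have h1 := hP L hLL
    have h2 : Qf L = β * v₀ L - α * v₁ L := rfl
    rw [h2]
    linear_combination -α * h1 + hv0L
  have e3 : γ * Qf L = B * Real.sinh (γ * L) := hQsinh L hLL
  -- A = m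
  have hAeq : A * (α * L * γ * Real.cosh (γ * L) + β * Real.sinh (γ * L)) =
      c * α * γ * Real.cosh (γ * L) := by
    linear_combination γ * Real.cosh (γ * L) * e2 - Real.cosh (γ * L) * e3 -
      Real.sinh (γ * L) * eq1
  have hden : 0 < α * L * γ * Real.cosh (γ * L) + β * Real.sinh (γ * L) := by positivity
  have hmeq : m * (α * L * γ * Real.cosh (γ * L) + β * Real.sinh (γ * L)) =
      c * α * γ * Real.cosh (γ * L) := by
    have htanh : Real.tanh (γ * L) = Real.sinh (γ * L) / Real.cosh (γ * L) :=
      Real.tanh_eq_sinh_div_cosh _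
    have hbig : ρ * L + (1 - ρ) * Real.tanh (γ * L) / γ ≠ 0 := by
      rw [hρ, htanh]
      have h1 : 0 < α / (α + β) * L := by positivity
      have h2 : 0 < (1 - α / (α + β)) * (Real.sinh (γ * L) / Real.cosh (γ * L)) / γ := by
        have : 1 - α / (α + β) = β / (α + β) := by field_simp; ring
        rw [this]; positivity
      positivity
    rw [hρ, htanh] at hbig
    rw [hm, hρ, htanh, div_mul_eq_mul_div, div_eq_iff hbig]
    field_simp
    ring
  have hAm : A = m := by
    have h := hAeq.trans hmeq.symm
    exact mul_right_cancel₀ (ne_of_gt hden) h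
  have hBm : B * Real.cosh (γ * L) = β * m := by rw [eq1, hAm]
  -- Step 6: conclude
  intro x hx
  have h1 := hP x hx
  have h2 := hQsinh x hx
  rw [hAm] at h1
  have h2' : γ * (β * v₀ x - α * v₁ x) = B * Real.sinh (γ * x) := h2
  have hch' : Real.cosh (γ * L) ≠ 0 := ne_of_gt hch
  have hγ' : γ ≠ 0 := ne_of_gt hγpos
  have hαβ' : α + β ≠ 0 := ne_of_gt hαβ
  constructor
  · rw [hρ]
    field_simp
    rw [mul_comm x γ]
    linear_combination (α * γ * Real.cosh (γ * L)) * h1 +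
      Real.cosh (γ * L) * h2' + Real.sinh (γ * x) * hBm
  · rw [hρ]
    field_simp
    rw [mul_comm x γ]
    linear_combination (β * γ * Real.cosh (γ * L)) * h1 -
      Real.cosh (γ * L) * h2' - Real.sinh (γ * x) * hBm
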